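/- For every integer k ≥ 2 there exists a finite partially ordered set (V, ≤) and a greedy chain sequence C_1, …, C_k of length k such that |C_1 ∪ … ∪ C_k| ≤ (3/4)·β_k; moreover in the construction β_k = |V|, so the k greedy chains cover at most 3/4 of the optimal coverage of k chains. -/

import Mathlib

/-- A greedy chain sequence: pairwise disjoint chains `C 0, …, C (m-1)` such that each
`C i` has maximum cardinality among all chains contained in the complement of the
previously chosen chains. -/
def GreedyChainSeq (V : Type) [DecidableEq V] [PartialOrder V]
    {m : ℕ} (C : Fin m → Finset V) : Prop :=
  (∀ i, IsChain (· ≤ ·) ((C i : Finset V) : Set V)) ∧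
  (∀ i j, i ≠ j → Disjoint (C i) (C j)) ∧
  (∀ (i : Fin m) (D : Finset V), IsChain (· ≤ ·) ((D : Finset V) : Set V) →
    (∀ v ∈ D, ∀ j, j < i → v ∉ C j) → D.card ≤ (C i).card)

/-- `β_k`: the maximum cardinality of the union of `k` pairwise disjoint chains. -/
noncomputable def betaVal (V : Type) [Fintype V] [DecidableEq V] [PartialOrder V]
    (k : ℕ) : ℕ :=
  sSup {n : ℕ | ∃ C : Fin k → Finset V,
    (∀ i, IsChain (· ≤ ·) ((C i : Finset V) : Set V)) ∧
    (∀ i j, i ≠ j → Disjoint (C i) (C j)) ∧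
    n = (Finset.univ.biUnion C).card}

def GreedyChainsMissQuarter (V : Type) [Fintype V] [DecidableEq V] [PartialOrder V]
    (k : ℕ) : Prop :=
  ∃ C : Fin k → Finset V, GreedyChainSeq V C ∧
    4 * (Finset.univ.biUnion C).card ≤ 3 * betaVal V k ∧
    betaVal V k = Fintype.card V


set_option maxRecDepth 40000

namespace GreedyQuarter

/-- The 4-element gadget: `A < B`, `C < D`, `A < D`. -/
inductive Gad : Type
  | A | B | C | D
deriving DecidableEq

instance : Fintype Gad := ⟨{.A, .B, .C, .D}, by intro x; cases x <;> decide⟩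

def Gad.ble : Gad → Gad → Bool
  | .A, .B => true
  | .C, .D => true
  | .A, .D => true
  | a, b => a == b

instance : PartialOrder Gad where
  le a b := Gad.ble a b
  le_refl := by intro a; change Gad.ble a a = true; revert a; decide
  le_trans := by
    intro a b c
    change Gad.ble a b = true → Gad.ble b c = true → Gad.ble a c = true
    revert a b c; decide
  le_antisymm := by
    intro a b
    change Gad.ble a b = true → Gad.ble b a = true → a = b
    revert a b; decide

instance : DecidableRel ((· ≤ ·) : Gad → Gad → Prop) :=
  fun a b => inferInstanceAs (Decidable (Gad.ble a b = true))

lemma Gad.chain_card_le_two : ∀ D : Finset Gad,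
    (∀ x ∈ D, ∀ y ∈ D, x ≤ y ∨ y ≤ x) → D.card ≤ 2 := by decide

lemma Gad.bc_eq : ∀ u v : Gad, (u = .B ∨ u = .C) → (v = .B ∨ v = .C) → u ≤ v → u = v := by
  decide

lemma Gad.not_ad : ∀ g : Gad, g ≠ .A → g ≠ .D → g = .B ∨ g = .C := by decide

/-- The 8-element gadget. -/
inductive F8 : Type
  | x1 | x2 | x3 | y1 | y2 | y3 | z1 | z2
deriving DecidableEq

instance : Fintype F8 :=
  ⟨{.x1, .x2, .x3, .y1, .y2, .y3, .z1, .z2}, by intro x; cases x <;> decide⟩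

def F8.ble : F8 → F8 → Bool
  | .x1, .x2 => true
  | .x1, .x3 => true
  | .x1, .y3 => true
  | .x1, .z2 => true
  | .x2, .x3 => true
  | .y1, .x3 => true
  | .y1, .y2 => true
  | .y1, .y3 => true
  | .y2, .y3 => true
  | .z1, .y3 => true
  | .z1, .z2 => true
  | .z2, .y3 => true
  | a, b => a == b

instance : PartialOrder F8 where
  le a b := F8.ble a b
  le_refl := by intro a; change F8.ble a a = true; revert a; decide
  le_trans := by
    intro a b c
    change F8.ble a b = true → F8.ble b c = true → F8.ble a c = true
    revert a b c; decide
  le_antisymm := by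
    intro a b
    change F8.ble a b = true → F8.ble b a = true → a = b
    revert a b; decide

instance : DecidableRel ((· ≤ ·) : F8 → F8 → Prop) :=
  fun a b => inferInstanceAs (Decidable (F8.ble a b = true))

lemma F8.chain_card_le_three : ∀ D : Finset F8,
    (∀ x ∈ D, ∀ y ∈ D, x ≤ y ∨ y ≤ x) → D.card ≤ 3 := by decide

lemma F8.chain_card_le_two : ∀ D : Finset F8,
    (∀ x ∈ D, ∀ y ∈ D, x ≤ y ∨ y ≤ x) →
    F8.x1 ∉ D → F8.z2 ∉ D → F8.y3 ∉ D → D.card ≤ 2 := by decide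

lemma F8.anti : ∀ u v : F8, (u = .x2 ∨ u = .y2 ∨ u = .z1) →
    (v = .x2 ∨ v = .y2 ∨ v = .z1) → u ≤ v → u = v := by decide

lemma F8.notmem : ∀ a : F8, a ≠ .x1 → a ≠ .z2 → a ≠ .y3 → a ≠ .y1 → a ≠ .x3 →
    a = .x2 ∨ a = .y2 ∨ a = .z1 := by
  intro a h1 h2 h3 h4 h5; cases a <;> simp_all

end GreedyQuarter

namespace GreedyQuarter

/-- `p` disjoint copies of the gadget. -/
@[ext] structure Vp (p : ℕ) where
  g : Gad
  i : Fin p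
deriving DecidableEq, Fintype

variable {p : ℕ}

instance : PartialOrder (Vp p) where
  le x y := x.i = y.i ∧ x.g ≤ y.g
  le_refl x := ⟨rfl, le_refl _⟩
  le_trans x y z h1 h2 := ⟨h1.1.trans h2.1, h1.2.trans h2.2⟩
  le_antisymm x y h1 h2 := Vp.ext (le_antisymm h1.2 h2.2) h1.1

lemma Vp.le_def {x y : Vp p} : x ≤ y ↔ x.i = y.i ∧ x.g ≤ y.g := Iff.rfl

lemma Gad.AleB : Gad.A ≤ Gad.B := by decide
lemma Gad.AleD : Gad.A ≤ Gad.D := by decide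
lemma Gad.CleD : Gad.C ≤ Gad.D := by decide

lemma Vp.eq_mk {p : ℕ} {v : Vp p} {g : Gad} {j : Fin p}
    (hg : v.g = g) (hi : (v.i : ℕ) = (j : ℕ)) : v = ⟨g, j⟩ :=
  Vp.ext hg (Fin.ext hi)

lemma Vp.chain_card_le_two (D : Finset (Vp p))
    (h : ∀ x ∈ D, ∀ y ∈ D, x ≤ y ∨ y ≤ x) : D.card ≤ 2 := by
  have hinj : Set.InjOn Vp.g (D : Set (Vp p)) := by
    intro x hx y hy hg
    rcases h x hx y hy with h' | h'
    · exact Vp.ext hg h'.1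
    · exact Vp.ext hg h'.1.symm
  have : (D.image Vp.g).card = D.card := Finset.card_image_of_injOn hinj
  rw [← this]
  apply Gad.chain_card_le_two
  intro u hu v hv
  simp only [Finset.mem_image] at hu hv
  obtain ⟨x, hx, rfl⟩ := hu
  obtain ⟨y, hy, rfl⟩ := hv
  rcases h x hx y hy with h' | h'
  · exact Or.inl h'.2
  · exact Or.inr h'.2

lemma Vp.bc_card_le_one (D : Finset (Vp p))
    (h : ∀ x ∈ D, ∀ y ∈ D, x ≤ y ∨ y ≤ x)
    (hg : ∀ v ∈ D, v.g = .B ∨ v.g = .C) : D.card ≤ 1 := by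
  apply Finset.card_le_one.mpr
  intro a ha b hb
  rcases h a ha b hb with h' | h'
  · exact Vp.ext (Gad.bc_eq _ _ (hg a ha) (hg b hb) h'.2) h'.1
  · exact (Vp.ext (Gad.bc_eq _ _ (hg b hb) (hg a ha) h'.2) h'.1).symm

lemma isChain_of_pairs {α : Type} [PartialOrder α] (s : Set α)
    (h : ∀ x ∈ s, ∀ y ∈ s, x ≤ y ∨ y ≤ x) : IsChain (· ≤ ·) s :=
  fun x hx y hy _ => h x hx y hy

lemma pairs_of_isChain {α : Type} [PartialOrder α] (s : Set α)
    (h : IsChain (· ≤ ·) s) : ∀ x ∈ s, ∀ y ∈ s, x ≤ y ∨ y ≤ x := by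
  intro x hx y hy
  by_cases hxy : x = y
  · exact Or.inl (hxy ▸ le_refl x)
  · exact h hx hy hxy

/-- Generic: if some `k` disjoint chains cover everything, `betaVal = |V|`. -/
lemma beta_eq_card {V : Type} [Fintype V] [DecidableEq V] [PartialOrder V] {k : ℕ}
    (C : Fin k → Finset V)
    (hc : ∀ i, IsChain (· ≤ ·) ((C i : Finset V) : Set V))
    (hd : ∀ i j, i ≠ j → Disjoint (C i) (C j))
    (hcov : Finset.univ.biUnion C = Finset.univ) :
    betaVal V k = Fintype.card V := by
  have hmem : Fintype.card V ∈ {n : ℕ | ∃ C : Fin k → Finset V,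
      (∀ i, IsChain (· ≤ ·) ((C i : Finset V) : Set V)) ∧
      (∀ i j, i ≠ j → Disjoint (C i) (C j)) ∧
      n = (Finset.univ.biUnion C).card} := by
    exact ⟨C, hc, hd, by rw [hcov, Finset.card_univ]⟩
  have hub : ∀ n ∈ {n : ℕ | ∃ C : Fin k → Finset V,
      (∀ i, IsChain (· ≤ ·) ((C i : Finset V) : Set V)) ∧
      (∀ i j, i ≠ j → Disjoint (C i) (C j)) ∧
      n = (Finset.univ.biUnion C).card}, n ≤ Fintype.card V := by
    rintro n ⟨C', -, -, rfl⟩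
    exact Finset.card_le_univ _
  exact le_antisymm (csSup_le ⟨_, hmem⟩ hub) (le_csSup ⟨Fintype.card V, hub⟩ hmem)


/-! ### The even case: `k = 2p` -/

/-- Greedy chains for the even case. -/
def CE (p : ℕ) : Fin (2*p) → Finset (Vp p) := fun i =>
  if h : (i : ℕ) < p then
    {⟨.A, ⟨i, h⟩⟩, ⟨.D, ⟨i, h⟩⟩}
  else
    {⟨.B, ⟨(i : ℕ) - p, by have := i.isLt; omega⟩⟩}

lemma mem_CE {p : ℕ} {i : Fin (2*p)} {v : Vp p} (hv : v ∈ CE p i) :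
    ((i : ℕ) < p ∧ (v.g = .A ∨ v.g = .D) ∧ (v.i : ℕ) = (i : ℕ)) ∨
    (¬ (i : ℕ) < p ∧ v.g = .B ∧ (v.i : ℕ) = (i : ℕ) - p) := by
  simp only [CE] at hv
  split_ifs at hv with h
  · simp only [Finset.mem_insert, Finset.mem_singleton] at hv
    rcases hv with rfl | rfl
    · exact Or.inl ⟨h, Or.inl rfl, rfl⟩
    · exact Or.inl ⟨h, Or.inr rfl, rfl⟩
  · simp only [Finset.mem_singleton] at hv
    subst hv
    exact Or.inr ⟨h, rfl, rfl⟩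

lemma CE_chain (p : ℕ) (i : Fin (2*p)) :
    IsChain (· ≤ ·) ((CE p i : Finset (Vp p)) : Set (Vp p)) := by
  apply isChain_of_pairs
  intro x hx y hy
  simp only [Finset.mem_coe, CE] at hx hy
  split_ifs at hx hy with h
  · simp only [Finset.mem_insert, Finset.mem_singleton] at hx hy
    rcases hx with rfl | rfl <;> rcases hy with rfl | rfl
    · exact Or.inl (le_refl _)
    · exact Or.inl ⟨rfl, Gad.AleD⟩
    · exact Or.inr ⟨rfl, Gad.AleD⟩
    · exact Or.inl (le_refl _)
  · simp only [Finset.mem_singleton] at hx hy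
    subst hx; subst hy
    exact Or.inl (le_refl _)

lemma CE_disj (p : ℕ) : ∀ i j, i ≠ j → Disjoint (CE p i) (CE p j) := by
  intro i j hij
  rw [Finset.disjoint_left]
  intro v hvi hvj
  have hij' : (i : ℕ) ≠ (j : ℕ) := fun hh => hij (Fin.ext hh)
  rcases mem_CE hvi with ⟨h1, hg1, he1⟩ | ⟨h1, hg1, he1⟩ <;>
    rcases mem_CE hvj with ⟨h2, hg2, he2⟩ | ⟨h2, hg2, he2⟩
  · omega
  · rcases hg1 with h | h <;> rw [h] at hg2 <;> simp at hg2
  · rcases hg2 with h | h <;> rw [h] at hg1 <;> simp at hg1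
  · omega

lemma CE_card (p : ℕ) (i : Fin (2*p)) :
    (CE p i).card = if (i : ℕ) < p then 2 else 1 := by
  simp only [CE]
  split_ifs with h
  · rw [Finset.card_insert_of_notMem (by simp), Finset.card_singleton]
  · exact Finset.card_singleton _

lemma CE_greedy (p : ℕ) : GreedyChainSeq (Vp p) (CE p) := by
  refine ⟨CE_chain p, CE_disj p, ?_⟩
  intro i D hD hav
  have hD' := pairs_of_isChain _ hD
  simp only [Finset.mem_coe] at hD'
  rw [CE_card]
  split_ifs with h
  · exact Vp.chain_card_le_two D hD'
  · apply Vp.bc_card_le_one D hD'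
    intro v hv
    have hvi : (v.i : ℕ) < p := v.i.isLt
    have hji : (⟨(v.i : ℕ), by omega⟩ : Fin (2*p)) < i := by
      rw [Fin.lt_def]
      simp only [Fin.val_mk]
      omega
    have hnot := hav v hv ⟨(v.i : ℕ), by omega⟩ hji
    apply Gad.not_ad
    · intro hA
      apply hnot
      simp only [CE, Fin.val_mk, dif_pos hvi, Finset.mem_insert, Finset.mem_singleton]
      exact Or.inl (Vp.eq_mk hA rfl)
    · intro hDg
      apply hnot
      simp only [CE, Fin.val_mk, dif_pos hvi, Finset.mem_insert, Finset.mem_singleton]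
      exact Or.inr (Vp.eq_mk hDg rfl)

lemma CE_cover_card (p : ℕ) : (Finset.univ.biUnion (CE p)).card = 3 * p := by
  rw [Finset.card_biUnion (fun i _ j _ hij => CE_disj p i j hij)]
  rw [Finset.sum_congr rfl (fun i _ => CE_card p i)]
  rw [Fin.sum_univ_eq_sum_range (fun n => if n < p then 2 else 1) (2*p)]
  rw [two_mul, Finset.sum_range_add]
  have h1 : (∑ i ∈ Finset.range p, if i < p then 2 else 1) = 2 * p := by
    rw [Finset.sum_congr rfl (fun i hi => if_pos (Finset.mem_range.mp hi))]
    simp [mul_comm]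
  have h2 : (∑ i ∈ Finset.range p, if p + i < p then 2 else 1) = p := by
    rw [Finset.sum_congr rfl (fun i _ => if_neg (by omega))]
    simp
  omega

/-- Optimal chains for the even case. -/
def DE (p : ℕ) : Fin (2*p) → Finset (Vp p) := fun i =>
  if h : (i : ℕ) < p then
    {⟨.A, ⟨i, h⟩⟩, ⟨.B, ⟨i, h⟩⟩}
  else
    {⟨.C, ⟨(i : ℕ) - p, by have := i.isLt; omega⟩⟩,
     ⟨.D, ⟨(i : ℕ) - p, by have := i.isLt; omega⟩⟩}

lemma mem_DE {p : ℕ} {i : Fin (2*p)} {v : Vp p} (hv : v ∈ DE p i) :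
    ((i : ℕ) < p ∧ (v.g = .A ∨ v.g = .B) ∧ (v.i : ℕ) = (i : ℕ)) ∨
    (¬ (i : ℕ) < p ∧ (v.g = .C ∨ v.g = .D) ∧ (v.i : ℕ) = (i : ℕ) - p) := by
  simp only [DE] at hv
  split_ifs at hv with h <;>
    simp only [Finset.mem_insert, Finset.mem_singleton] at hv <;>
    rcases hv with rfl | rfl
  · exact Or.inl ⟨h, Or.inl rfl, rfl⟩
  · exact Or.inl ⟨h, Or.inr rfl, rfl⟩
  · exact Or.inr ⟨h, Or.inl rfl, rfl⟩
  · exact Or.inr ⟨h, Or.inr rfl, rfl⟩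

lemma DE_chain (p : ℕ) (i : Fin (2*p)) :
    IsChain (· ≤ ·) ((DE p i : Finset (Vp p)) : Set (Vp p)) := by
  apply isChain_of_pairs
  intro x hx y hy
  simp only [Finset.mem_coe, DE] at hx hy
  split_ifs at hx hy with h <;>
    simp only [Finset.mem_insert, Finset.mem_singleton] at hx hy <;>
    rcases hx with rfl | rfl <;> rcases hy with rfl | rfl
  · exact Or.inl (le_refl _)
  · exact Or.inl ⟨rfl, Gad.AleB⟩
  · exact Or.inr ⟨rfl, Gad.AleB⟩
  · exact Or.inl (le_refl _)
  · exact Or.inl (le_refl _)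
  · exact Or.inl ⟨rfl, Gad.CleD⟩
  · exact Or.inr ⟨rfl, Gad.CleD⟩
  · exact Or.inl (le_refl _)

lemma DE_disj (p : ℕ) : ∀ i j, i ≠ j → Disjoint (DE p i) (DE p j) := by
  intro i j hij
  rw [Finset.disjoint_left]
  intro v hvi hvj
  have hij' : (i : ℕ) ≠ (j : ℕ) := fun hh => hij (Fin.ext hh)
  rcases mem_DE hvi with ⟨h1, hg1, he1⟩ | ⟨h1, hg1, he1⟩ <;>
    rcases mem_DE hvj with ⟨h2, hg2, he2⟩ | ⟨h2, hg2, he2⟩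
  · omega
  · rcases hg1 with h | h <;> rcases hg2 with h' | h' <;> rw [h] at h' <;> simp at h'
  · rcases hg1 with h | h <;> rcases hg2 with h' | h' <;> rw [h] at h' <;> simp at h'
  · omega

lemma DE_cover (p : ℕ) : Finset.univ.biUnion (DE p) = Finset.univ := by
  apply Finset.eq_univ_of_forall
  intro v
  rw [Finset.mem_biUnion]
  have hvp : (v.i : ℕ) < p := v.i.isLt
  have hnp : ¬ (p + (v.i : ℕ) < p) := by omega
  rcases hg : v.g with _ | _ | _ | _
  · refine ⟨⟨(v.i : ℕ), by omega⟩, Finset.mem_univ _, ?_⟩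
    simp only [DE, Fin.val_mk, dif_pos hvp, Finset.mem_insert, Finset.mem_singleton]
    exact Or.inl (Vp.eq_mk hg rfl)
  · refine ⟨⟨(v.i : ℕ), by omega⟩, Finset.mem_univ _, ?_⟩
    simp only [DE, Fin.val_mk, dif_pos hvp, Finset.mem_insert, Finset.mem_singleton]
    exact Or.inr (Vp.eq_mk hg rfl)
  · refine ⟨⟨p + (v.i : ℕ), by omega⟩, Finset.mem_univ _, ?_⟩
    simp only [DE, Fin.val_mk, dif_neg hnp, Finset.mem_insert, Finset.mem_singleton]
    exact Or.inl (Vp.eq_mk hg (show (v.i : ℕ) = p + (v.i : ℕ) - p by omega))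
  · refine ⟨⟨p + (v.i : ℕ), by omega⟩, Finset.mem_univ _, ?_⟩
    simp only [DE, Fin.val_mk, dif_neg hnp, Finset.mem_insert, Finset.mem_singleton]
    exact Or.inr (Vp.eq_mk hg (show (v.i : ℕ) = p + (v.i : ℕ) - p by omega))

lemma DE_card (p : ℕ) (i : Fin (2*p)) : (DE p i).card = 2 := by
  simp only [DE]
  split_ifs with h <;>
    rw [Finset.card_insert_of_notMem (by simp), Finset.card_singleton]

lemma Vp_card (p : ℕ) : Fintype.card (Vp p) = 4 * p := by
  rw [← Finset.card_univ, ← DE_cover p,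
    Finset.card_biUnion (fun i _ j _ hij => DE_disj p i j hij),
    Finset.sum_congr rfl (fun i _ => DE_card p i)]
  simp [Finset.sum_const, mul_comm]
  ring

lemma even_case (p : ℕ) : GreedyChainsMissQuarter (Vp p) (2*p) := by
  have hbeta : betaVal (Vp p) (2*p) = Fintype.card (Vp p) :=
    beta_eq_card (DE p) (DE_chain p) (DE_disj p) (DE_cover p)
  refine ⟨CE p, CE_greedy p, ?_, hbeta⟩
  rw [hbeta, Vp_card, CE_cover_card]
  omega


/-! ### The odd case: `k = 2q + 3`, poset `F8 ⊕ Vp q` -/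

lemma sum_side {q : ℕ} (D : Finset (F8 ⊕ Vp q))
    (h : ∀ x ∈ D, ∀ y ∈ D, x ≤ y ∨ y ≤ x) :
    (∀ v ∈ D, ∃ a, v = Sum.inl a) ∨ (∀ v ∈ D, ∃ b, v = Sum.inr b) := by
  by_contra hc
  push_neg at hc
  obtain ⟨⟨u, hu, hul⟩, ⟨w, hw, hwr⟩⟩ := hc
  cases u with
  | inl a => exact hul a rfl
  | inr b =>
    cases w with
    | inr b' => exact hwr b' rfl
    | inl a =>
      rcases h _ hu _ hw with h' | h'
      · exact Sum.not_inr_le_inl h'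
      · exact Sum.not_inl_le_inr h'

lemma card_right_le_two {q : ℕ} (D : Finset (F8 ⊕ Vp q))
    (h : ∀ x ∈ D, ∀ y ∈ D, x ≤ y ∨ y ≤ x)
    (hall : ∀ v ∈ D, ∃ b, v = Sum.inr b) : D.card ≤ 2 := by
  rcases D.eq_empty_or_nonempty with rfl | ⟨v0, hv0⟩
  · simp
  obtain ⟨b0, rfl⟩ := hall v0 hv0
  set f : F8 ⊕ Vp q → Vp q := Sum.elim (fun _ => b0) id with hf
  have hinj : Set.InjOn f (D : Set _) := by
    intro x hx y hy hxy
    obtain ⟨a, rfl⟩ := hall x hx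
    obtain ⟨b, rfl⟩ := hall y hy
    simp only [hf, Sum.elim_inr] at hxy
    exact congrArg Sum.inr hxy
  rw [← Finset.card_image_of_injOn hinj]
  apply Vp.chain_card_le_two
  intro u hu v hv
  simp only [Finset.mem_image] at hu hv
  obtain ⟨x, hx, rfl⟩ := hu
  obtain ⟨y, hy, rfl⟩ := hv
  obtain ⟨a, rfl⟩ := hall x hx
  obtain ⟨b, rfl⟩ := hall y hy
  simp only [hf, Sum.elim_inr]
  rcases h _ hx _ hy with h' | h'
  · exact Or.inl (Sum.inr_le_inr_iff.mp h')
  · exact Or.inr (Sum.inr_le_inr_iff.mp h')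

lemma chainW_card_le_three {q : ℕ} (D : Finset (F8 ⊕ Vp q))
    (h : ∀ x ∈ D, ∀ y ∈ D, x ≤ y ∨ y ≤ x) : D.card ≤ 3 := by
  rcases sum_side D h with hall | hall
  · set f : F8 ⊕ Vp q → F8 := Sum.elim id (fun _ => F8.x1) with hf
    have hinj : Set.InjOn f (D : Set _) := by
      intro x hx y hy hxy
      obtain ⟨a, rfl⟩ := hall x hx
      obtain ⟨b, rfl⟩ := hall y hy
      simp only [hf, Sum.elim_inl] at hxy
      exact congrArg Sum.inl hxy
    rw [← Finset.card_image_of_injOn hinj]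
    apply F8.chain_card_le_three
    intro u hu v hv
    simp only [Finset.mem_image] at hu hv
    obtain ⟨x, hx, rfl⟩ := hu
    obtain ⟨y, hy, rfl⟩ := hv
    obtain ⟨a, rfl⟩ := hall x hx
    obtain ⟨b, rfl⟩ := hall y hy
    simp only [hf, Sum.elim_inl]
    rcases h _ hx _ hy with h' | h'
    · exact Or.inl (Sum.inl_le_inl_iff.mp h')
    · exact Or.inr (Sum.inl_le_inl_iff.mp h')
  · exact le_trans (card_right_le_two D h hall) (by omega)

lemma chainW_card_le_two {q : ℕ} (D : Finset (F8 ⊕ Vp q))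
    (h : ∀ x ∈ D, ∀ y ∈ D, x ≤ y ∨ y ≤ x)
    (h1 : Sum.inl F8.x1 ∉ D) (h2 : Sum.inl F8.z2 ∉ D) (h3 : Sum.inl F8.y3 ∉ D) :
    D.card ≤ 2 := by
  rcases sum_side D h with hall | hall
  · set f : F8 ⊕ Vp q → F8 := Sum.elim id (fun _ => F8.x1) with hf
    have hinj : Set.InjOn f (D : Set _) := by
      intro x hx y hy hxy
      obtain ⟨a, rfl⟩ := hall x hx
      obtain ⟨b, rfl⟩ := hall y hy
      simp only [hf, Sum.elim_inl] at hxy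
      exact congrArg Sum.inl hxy
    rw [← Finset.card_image_of_injOn hinj]
    have himg : ∀ a : F8, a ∈ D.image f → Sum.inl a ∈ D := by
      intro a ha
      simp only [Finset.mem_image] at ha
      obtain ⟨x, hx, rfl⟩ := ha
      obtain ⟨a', rfl⟩ := hall x hx
      simpa [hf] using hx
    apply F8.chain_card_le_two
    · intro u hu v hv
      simp only [Finset.mem_image] at hu hv
      obtain ⟨x, hx, rfl⟩ := hu
      obtain ⟨y, hy, rfl⟩ := hv
      obtain ⟨a, rfl⟩ := hall x hx
      obtain ⟨b, rfl⟩ := hall y hy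
      simp only [hf, Sum.elim_inl]
      rcases h _ hx _ hy with h' | h'
      · exact Or.inl (Sum.inl_le_inl_iff.mp h')
      · exact Or.inr (Sum.inl_le_inl_iff.mp h')
    · exact fun hmem => h1 (himg _ hmem)
    · exact fun hmem => h2 (himg _ hmem)
    · exact fun hmem => h3 (himg _ hmem)
  · exact card_right_le_two D h hall

lemma W_anti {q : ℕ} (D : Finset (F8 ⊕ Vp q))
    (h : ∀ x ∈ D, ∀ y ∈ D, x ≤ y ∨ y ≤ x)
    (hmem : ∀ v ∈ D, (∃ a, v = Sum.inl a ∧ (a = .x2 ∨ a = .y2 ∨ a = .z1)) ∨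
      (∃ b, v = Sum.inr b ∧ (b.g = .B ∨ b.g = .C))) : D.card ≤ 1 := by
  apply Finset.card_le_one.mpr
  intro u hu v hv
  rcases hmem u hu with ⟨a, rfl, ha⟩ | ⟨b, rfl, hb⟩ <;>
    rcases hmem v hv with ⟨a', rfl, ha'⟩ | ⟨b', rfl, hb'⟩
  · rcases h _ hu _ hv with h' | h'
    · rw [F8.anti a a' ha ha' (Sum.inl_le_inl_iff.mp h')]
    · rw [F8.anti a' a ha' ha (Sum.inl_le_inl_iff.mp h')]
  · rcases h _ hu _ hv with h' | h'
    · exact (Sum.not_inl_le_inr h').elim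
    · exact (Sum.not_inr_le_inl h').elim
  · rcases h _ hu _ hv with h' | h'
    · exact (Sum.not_inr_le_inl h').elim
    · exact (Sum.not_inl_le_inr h').elim
  · rcases h _ hu _ hv with h' | h'
    · have h'' := Sum.inr_le_inr_iff.mp h'
      rw [Vp.ext (Gad.bc_eq _ _ hb hb' h''.2) h''.1]
    · have h'' := Sum.inr_le_inr_iff.mp h'
      rw [Vp.ext (Gad.bc_eq _ _ hb' hb h''.2) h''.1]

/-- Greedy chains for the odd case. -/
def CO (q : ℕ) : Fin (2*q+3) → Finset (F8 ⊕ Vp q) := fun i =>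
  if h0 : (i : ℕ) = 0 then {Sum.inl .x1, Sum.inl .z2, Sum.inl .y3}
  else if h1 : (i : ℕ) < q+1 then
    {Sum.inr ⟨.A, ⟨(i : ℕ) - 1, by omega⟩⟩, Sum.inr ⟨.D, ⟨(i : ℕ) - 1, by omega⟩⟩}
  else if h2 : (i : ℕ) = q+1 then {Sum.inl .y1, Sum.inl .x3}
  else if h3 : (i : ℕ) < 2*q+2 then {Sum.inr ⟨.B, ⟨(i : ℕ) - (q+2), by omega⟩⟩}
  else {Sum.inl .x2}

/-- Index owning a given element, for `CO`. -/
def ownCO (q : ℕ) : F8 ⊕ Vp q → ℕ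
  | .inl .x1 => 0
  | .inl .z2 => 0
  | .inl .y3 => 0
  | .inl .y1 => q+1
  | .inl .x3 => q+1
  | .inl .x2 => 2*q+2
  | .inl _ => 2*q+3
  | .inr b => if b.g = .A ∨ b.g = .D then (b.i : ℕ) + 1 else (b.i : ℕ) + (q+2)

lemma CO_own {q : ℕ} {i : Fin (2*q+3)} {v : F8 ⊕ Vp q} (hv : v ∈ CO q i) :
    (i : ℕ) = ownCO q v := by
  simp only [CO] at hv
  split_ifs at hv with h0 h1 h2 h3 <;>
      simp only [Finset.mem_insert, Finset.mem_singleton] at hv <;>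
      have hlt := i.isLt
  · rcases hv with rfl | rfl | rfl <;> simp [ownCO, h0]
  · rcases hv with rfl | rfl <;> simp [ownCO] <;> omega
  · rcases hv with rfl | rfl <;> simp [ownCO, h2]
  · subst hv
    simp [ownCO]
    omega
  · subst hv
    simp [ownCO]
    omega

lemma CO_disj (q : ℕ) : ∀ i j, i ≠ j → Disjoint (CO q i) (CO q j) := by
  intro i j hij
  rw [Finset.disjoint_left]
  intro v hvi hvj
  exact hij (Fin.ext ((CO_own hvi).trans (CO_own hvj).symm))

lemma CO_chain (q : ℕ) (i : Fin (2*q+3)) :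
    IsChain (· ≤ ·) ((CO q i : Finset (F8 ⊕ Vp q)) : Set (F8 ⊕ Vp q)) := by
  apply isChain_of_pairs
  intro x hx y hy
  simp only [Finset.mem_coe, CO] at hx hy
  split_ifs at hx hy with h0 h1 h2 h3 <;>
      simp only [Finset.mem_insert, Finset.mem_singleton] at hx hy
  · rcases hx with rfl | rfl | rfl <;> rcases hy with rfl | rfl | rfl <;>
      first
        | exact Or.inl (le_refl _)
        | exact Or.inl (Sum.inl_le_inl_iff.mpr (by decide))
        | exact Or.inr (Sum.inl_le_inl_iff.mpr (by decide))
  · rcases hx with rfl | rfl <;> rcases hy with rfl | rfl <;>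
      first
        | exact Or.inl (le_refl _)
        | exact Or.inl (Sum.inr_le_inr_iff.mpr ⟨rfl, Gad.AleD⟩)
        | exact Or.inr (Sum.inr_le_inr_iff.mpr ⟨rfl, Gad.AleD⟩)
  · rcases hx with rfl | rfl <;> rcases hy with rfl | rfl <;>
      first
        | exact Or.inl (le_refl _)
        | exact Or.inl (Sum.inl_le_inl_iff.mpr (by decide))
        | exact Or.inr (Sum.inl_le_inl_iff.mpr (by decide))
  · subst hx; subst hy; exact Or.inl (le_refl _)
  · subst hx; subst hy; exact Or.inl (le_refl _)

def gCO (q n : ℕ) : ℕ := if n = 0 then 3 else if n < q+2 then 2 else 1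

lemma CO_card (q : ℕ) (i : Fin (2*q+3)) : (CO q i).card = gCO q (i : ℕ) := by
  have hlt := i.isLt
  simp only [CO, gCO]
  split_ifs with h0 h1 h2 h3 <;>
    first
      | omega
      | rfl
      | (rw [Finset.card_insert_of_not_mem (by simp),
          Finset.card_insert_of_not_mem (by simp), Finset.card_singleton])
      | (rw [Finset.card_insert_of_not_mem (by simp [Vp.mk.injEq]),
          Finset.card_singleton])


lemma CO_greedy (q : ℕ) : GreedyChainSeq (F8 ⊕ Vp q) (CO q) := by
  refine ⟨CO_chain q, CO_disj q, ?_⟩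
  intro i D hD hav
  have hD' := pairs_of_isChain _ hD
  simp only [Finset.mem_coe] at hD'
  have hlt := i.isLt
  rw [CO_card]
  simp only [gCO]
  split_ifs with h0 h1
  · exact chainW_card_le_three D hD'
  · have key : ∀ w : F8 ⊕ Vp q, w ∈ CO q ⟨0, by omega⟩ → w ∉ D := by
      intro w hw hwD
      exact hav w hwD ⟨0, by omega⟩
        (by rw [Fin.lt_def]; simp only [Fin.val_mk]; omega) hw
    have hmem0 : ∀ a : F8, a = .x1 ∨ a = .z2 ∨ a = .y3 →
        Sum.inl a ∈ CO q ⟨0, by omega⟩ := by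
      intro a ha
      rcases ha with rfl | rfl | rfl <;> simp [CO]
    exact chainW_card_le_two D hD'
      (fun hm => key _ (hmem0 _ (Or.inl rfl)) hm)
      (fun hm => key _ (hmem0 _ (Or.inr (Or.inl rfl))) hm)
      (fun hm => key _ (hmem0 _ (Or.inr (Or.inr rfl))) hm)
  · apply W_anti D hD'
    intro v hv
    have havj : ∀ (j : Fin (2*q+3)), (j : ℕ) < q+2 → v ∉ CO q j := by
      intro j hj
      exact hav v hv j (by rw [Fin.lt_def]; omega)
    cases v with
    | inl a =>
      left
      refine ⟨a, rfl, ?_⟩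
      have hB1 := havj ⟨0, by omega⟩ (by simp only [Fin.val_mk]; omega)
      have hB2 := havj ⟨q+1, by omega⟩ (by simp only [Fin.val_mk]; omega)
      have hmem1 : ∀ b : F8, b = .x1 ∨ b = .z2 ∨ b = .y3 →
          Sum.inl b ∈ CO q ⟨0, by omega⟩ := by
        intro b hb
        rcases hb with rfl | rfl | rfl <;> simp [CO]
      have hmem2 : ∀ b : F8, b = .y1 ∨ b = .x3 →
          Sum.inl b ∈ CO q ⟨q+1, by omega⟩ := by
        intro b hb
        rcases hb with rfl | rfl <;> simp [CO]
      apply F8.notmem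
      · rintro rfl; exact hB1 (hmem1 _ (Or.inl rfl))
      · rintro rfl; exact hB1 (hmem1 _ (Or.inr (Or.inl rfl)))
      · rintro rfl; exact hB1 (hmem1 _ (Or.inr (Or.inr rfl)))
      · rintro rfl; exact hB2 (hmem2 _ (Or.inl rfl))
      · rintro rfl; exact hB2 (hmem2 _ (Or.inr rfl))
    | inr b =>
      right
      refine ⟨b, rfl, ?_⟩
      have hbl := b.i.isLt
      have hj := havj ⟨(b.i : ℕ) + 1, by omega⟩ (by simp only [Fin.val_mk]; omega)
      have hmem3 : ∀ g : Gad, g = .A ∨ g = .D → b.g = g →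
          Sum.inr b ∈ CO q ⟨(b.i : ℕ) + 1, by omega⟩ := by
        intro g hgad hg
        simp only [CO, Fin.val_mk]
        rw [dif_neg (by omega), dif_pos (by omega)]
        simp only [Finset.mem_insert, Finset.mem_singleton]
        rcases hgad with rfl | rfl
        · exact Or.inl (congrArg Sum.inr
            (Vp.eq_mk hg (show (b.i : ℕ) = (b.i : ℕ) + 1 - 1 by omega)))
        · exact Or.inr (congrArg Sum.inr
            (Vp.eq_mk hg (show (b.i : ℕ) = (b.i : ℕ) + 1 - 1 by omega)))
      apply Gad.not_ad
      · exact fun hA => hj (hmem3 _ (Or.inl rfl) hA)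
      · exact fun hDg => hj (hmem3 _ (Or.inr rfl) hDg)

lemma CO_cover_card (q : ℕ) : (Finset.univ.biUnion (CO q)).card = 3*q+6 := by
  rw [Finset.card_biUnion (fun i _ j _ hij => CO_disj q i j hij),
    Finset.sum_congr rfl (fun i _ => CO_card q i),
    Fin.sum_univ_eq_sum_range (gCO q) (2*q+3),
    show 2*q+3 = 1+(q+1)+(q+1) by ring,
    Finset.sum_range_add, Finset.sum_range_add, Finset.sum_range_one]
  have e2 : ∀ i ∈ Finset.range (q+1), gCO q (1+i) = 2 := by
    intro i hi
    rw [Finset.mem_range] at hi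
    simp only [gCO]
    rw [if_neg (by omega), if_pos (by omega)]
  have e3 : ∀ i ∈ Finset.range (q+1), gCO q (1+(q+1)+i) = 1 := by
    intro i hi
    simp only [gCO]
    rw [if_neg (by omega), if_neg (by omega)]
  rw [Finset.sum_congr rfl e2, Finset.sum_congr rfl e3]
  have e0 : gCO q 0 = 3 := rfl
  rw [e0, Finset.sum_const, Finset.sum_const, Finset.card_range, smul_eq_mul,
    smul_eq_mul]
  omega

/-- Optimal chains for the odd case. -/
def DO (q : ℕ) : Fin (2*q+3) → Finset (F8 ⊕ Vp q) := fun i =>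
  if h0 : (i : ℕ) = 0 then {Sum.inl .x1, Sum.inl .x2, Sum.inl .x3}
  else if h1 : (i : ℕ) = 1 then {Sum.inl .y1, Sum.inl .y2, Sum.inl .y3}
  else if h2 : (i : ℕ) = 2 then {Sum.inl .z1, Sum.inl .z2}
  else if h3 : (i : ℕ) < q+3 then
    {Sum.inr ⟨.A, ⟨(i : ℕ)-3, by omega⟩⟩, Sum.inr ⟨.B, ⟨(i : ℕ)-3, by omega⟩⟩}
  else {Sum.inr ⟨.C, ⟨(i : ℕ)-(q+3), by have := i.isLt; omega⟩⟩,
        Sum.inr ⟨.D, ⟨(i : ℕ)-(q+3), by have := i.isLt; omega⟩⟩}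

/-- Index owning a given element, for `DO`. -/
def ownDO (q : ℕ) : F8 ⊕ Vp q → ℕ
  | .inl .x1 => 0
  | .inl .x2 => 0
  | .inl .x3 => 0
  | .inl .y1 => 1
  | .inl .y2 => 1
  | .inl .y3 => 1
  | .inl .z1 => 2
  | .inl .z2 => 2
  | .inr b => if b.g = .A ∨ b.g = .B then (b.i : ℕ) + 3 else (b.i : ℕ) + (q+3)

lemma DO_own {q : ℕ} {i : Fin (2*q+3)} {v : F8 ⊕ Vp q} (hv : v ∈ DO q i) :
    (i : ℕ) = ownDO q v := by
  simp only [DO] at hv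
  split_ifs at hv with h0 h1 h2 h3 <;>
      simp only [Finset.mem_insert, Finset.mem_singleton] at hv <;>
      have hlt := i.isLt
  · rcases hv with rfl | rfl | rfl <;> simp [ownDO, h0]
  · rcases hv with rfl | rfl | rfl <;> simp [ownDO, h1]
  · rcases hv with rfl | rfl <;> simp [ownDO, h2]
  · rcases hv with rfl | rfl <;> simp [ownDO] <;> omega
  · rcases hv with rfl | rfl <;> simp [ownDO] <;> omega

lemma DO_disj (q : ℕ) : ∀ i j, i ≠ j → Disjoint (DO q i) (DO q j) := by
  intro i j hij
  rw [Finset.disjoint_left]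
  intro v hvi hvj
  exact hij (Fin.ext ((DO_own hvi).trans (DO_own hvj).symm))

lemma DO_chain (q : ℕ) (i : Fin (2*q+3)) :
    IsChain (· ≤ ·) ((DO q i : Finset (F8 ⊕ Vp q)) : Set (F8 ⊕ Vp q)) := by
  apply isChain_of_pairs
  intro x hx y hy
  simp only [Finset.mem_coe, DO] at hx hy
  split_ifs at hx hy with h0 h1 h2 h3 <;>
      simp only [Finset.mem_insert, Finset.mem_singleton] at hx hy
  · rcases hx with rfl | rfl | rfl <;> rcases hy with rfl | rfl | rfl <;>
      first
        | exact Or.inl (le_refl _)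
        | exact Or.inl (Sum.inl_le_inl_iff.mpr (by decide))
        | exact Or.inr (Sum.inl_le_inl_iff.mpr (by decide))
  · rcases hx with rfl | rfl | rfl <;> rcases hy with rfl | rfl | rfl <;>
      first
        | exact Or.inl (le_refl _)
        | exact Or.inl (Sum.inl_le_inl_iff.mpr (by decide))
        | exact Or.inr (Sum.inl_le_inl_iff.mpr (by decide))
  · rcases hx with rfl | rfl <;> rcases hy with rfl | rfl <;>
      first
        | exact Or.inl (le_refl _)
        | exact Or.inl (Sum.inl_le_inl_iff.mpr (by decide))
        | exact Or.inr (Sum.inl_le_inl_iff.mpr (by decide))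
  · rcases hx with rfl | rfl <;> rcases hy with rfl | rfl <;>
      first
        | exact Or.inl (le_refl _)
        | exact Or.inl (Sum.inr_le_inr_iff.mpr ⟨rfl, Gad.AleB⟩)
        | exact Or.inr (Sum.inr_le_inr_iff.mpr ⟨rfl, Gad.AleB⟩)
  · rcases hx with rfl | rfl <;> rcases hy with rfl | rfl <;>
      first
        | exact Or.inl (le_refl _)
        | exact Or.inl (Sum.inr_le_inr_iff.mpr ⟨rfl, Gad.CleD⟩)
        | exact Or.inr (Sum.inr_le_inr_iff.mpr ⟨rfl, Gad.CleD⟩)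

def gDO (n : ℕ) : ℕ := if n = 0 then 3 else if n = 1 then 3 else 2

lemma DO_card (q : ℕ) (i : Fin (2*q+3)) : (DO q i).card = gDO (i : ℕ) := by
  have hlt := i.isLt
  simp only [DO, gDO]
  split_ifs with h0 h1 h2 h3 <;>
    first
      | omega
      | rfl
      | (rw [Finset.card_insert_of_not_mem (by simp),
          Finset.card_insert_of_not_mem (by simp), Finset.card_singleton])
      | (rw [Finset.card_insert_of_not_mem (by simp [Vp.mk.injEq]),
          Finset.card_singleton])

lemma DO_cover (q : ℕ) : Finset.univ.biUnion (DO q) = Finset.univ := by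
  apply Finset.eq_univ_of_forall
  intro v
  rw [Finset.mem_biUnion]
  cases v with
  | inl a =>
    have h02 : (0:ℕ) < 2*q+3 := by omega
    have h12 : (1:ℕ) < 2*q+3 := by omega
    have h22 : (2:ℕ) < 2*q+3 := by omega
    cases a with
    | x1 =>
      refine ⟨⟨0, h02⟩, Finset.mem_univ _, ?_⟩
      simp [DO]
    | x2 =>
      refine ⟨⟨0, h02⟩, Finset.mem_univ _, ?_⟩
      simp [DO]
    | x3 =>
      refine ⟨⟨0, h02⟩, Finset.mem_univ _, ?_⟩
      simp [DO]
    | y1 =>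
      refine ⟨⟨1, h12⟩, Finset.mem_univ _, ?_⟩
      simp [DO]
    | y2 =>
      refine ⟨⟨1, h12⟩, Finset.mem_univ _, ?_⟩
      simp [DO]
    | y3 =>
      refine ⟨⟨1, h12⟩, Finset.mem_univ _, ?_⟩
      simp [DO]
    | z1 =>
      refine ⟨⟨2, h22⟩, Finset.mem_univ _, ?_⟩
      simp [DO]
    | z2 =>
      refine ⟨⟨2, h22⟩, Finset.mem_univ _, ?_⟩
      simp [DO]
  | inr b =>
    have hbl := b.i.isLt
    rcases hg : b.g with _ | _ | _ | _
    · refine ⟨⟨(b.i : ℕ)+3, by omega⟩, Finset.mem_univ _, ?_⟩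
      simp only [DO, Fin.val_mk]
      rw [dif_neg (by omega), dif_neg (by omega), dif_neg (by omega),
        dif_pos (by omega)]
      simp only [Finset.mem_insert, Finset.mem_singleton]
      exact Or.inl (congrArg Sum.inr
        (Vp.eq_mk hg (show (b.i : ℕ) = (b.i : ℕ)+3-3 by omega)))
    · refine ⟨⟨(b.i : ℕ)+3, by omega⟩, Finset.mem_univ _, ?_⟩
      simp only [DO, Fin.val_mk]
      rw [dif_neg (by omega), dif_neg (by omega), dif_neg (by omega),
        dif_pos (by omega)]
      simp only [Finset.mem_insert, Finset.mem_singleton]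
      exact Or.inr (congrArg Sum.inr
        (Vp.eq_mk hg (show (b.i : ℕ) = (b.i : ℕ)+3-3 by omega)))
    · refine ⟨⟨(b.i : ℕ)+(q+3), by omega⟩, Finset.mem_univ _, ?_⟩
      simp only [DO, Fin.val_mk]
      rw [dif_neg (by omega), dif_neg (by omega), dif_neg (by omega),
        dif_neg (by omega)]
      simp only [Finset.mem_insert, Finset.mem_singleton]
      exact Or.inl (congrArg Sum.inr
        (Vp.eq_mk hg (show (b.i : ℕ) = (b.i : ℕ)+(q+3)-(q+3) by omega)))
    · refine ⟨⟨(b.i : ℕ)+(q+3), by omega⟩, Finset.mem_univ _, ?_⟩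
      simp only [DO, Fin.val_mk]
      rw [dif_neg (by omega), dif_neg (by omega), dif_neg (by omega),
        dif_neg (by omega)]
      simp only [Finset.mem_insert, Finset.mem_singleton]
      exact Or.inr (congrArg Sum.inr
        (Vp.eq_mk hg (show (b.i : ℕ) = (b.i : ℕ)+(q+3)-(q+3) by omega)))

lemma W_card (q : ℕ) : Fintype.card (F8 ⊕ Vp q) = 4*q+8 := by
  rw [← Finset.card_univ, ← DO_cover q,
    Finset.card_biUnion (fun i _ j _ hij => DO_disj q i j hij),
    Finset.sum_congr rfl (fun i _ => DO_card q i),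
    Fin.sum_univ_eq_sum_range gDO (2*q+3),
    show 2*q+3 = 1+1+(2*q+1) by ring,
    Finset.sum_range_add, Finset.sum_range_add, Finset.sum_range_one,
    Finset.sum_range_one]
  have e3 : ∀ i ∈ Finset.range (2*q+1), gDO (1+1+i) = 2 := by
    intro i hi
    simp only [gDO]
    rw [if_neg (by omega), if_neg (by omega)]
  rw [Finset.sum_congr rfl e3]
  have e0 : gDO 0 = 3 := rfl
  have e1 : gDO (1+0) = 3 := rfl
  rw [e0, e1, Finset.sum_const, Finset.card_range, smul_eq_mul]
  omega

lemma odd_case (q : ℕ) : GreedyChainsMissQuarter (F8 ⊕ Vp q) (2*q+3) := by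
  have hbeta : betaVal (F8 ⊕ Vp q) (2*q+3) = Fintype.card (F8 ⊕ Vp q) :=
    beta_eq_card (DO q) (DO_chain q) (DO_disj q) (DO_cover q)
  refine ⟨CO q, CO_greedy q, ?_, hbeta⟩
  rw [hbeta, W_card, CO_cover_card]
  omega

end GreedyQuarter

/-- For every `k ≥ 2` there is a finite poset on which some greedy chain sequence of
length `k` covers at most `3/4` of `β_k`; moreover in the construction `β_k = |V|`. -/
theorem greedy_chains_cover_three_quarters (k : ℕ) (hk : 2 ≤ k) :
    ∃ (V : Type) (f : Fintype V) (d : DecidableEq V) (p : PartialOrder V),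
      @GreedyChainsMissQuarter V f d p k := by
  rcases Nat.even_or_odd k with he | ho
  · obtain ⟨p, hp⟩ := he
    refine ⟨GreedyQuarter.Vp p, inferInstance, inferInstance, inferInstance, ?_⟩
    have hkp : k = 2*p := by omega
    rw [hkp]
    exact GreedyQuarter.even_case p
  · obtain ⟨m, hm⟩ := ho
    refine ⟨GreedyQuarter.F8 ⊕ GreedyQuarter.Vp (m-1), inferInstance, inferInstance,
      inferInstance, ?_⟩
    have hkp : k = 2*(m-1)+3 := by omega
    rw [hkp]
    exact GreedyQuarter.odd_case (m-1)
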